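/- Let G be an edge-weighted simple graph with weight function w: E(G) → Z_{>0}, edge ideal I(G_w) = ((x_i x_j)^{w(x_i x_j)} : x_i x_j ∈ E(G)) in S = K[x_1,...,x_n]. Suppose e = x_{n-1} x_n is a leaf edge of G (x_n has unique neighbor x_{n-1}) and w(e) ≤ w(x_{n-1} x_j) for all x_j ∈ N_G(x_{n-1}). Then for all t ≥ 2, the colon ideal (I(G_w)^t : (x_{n-1} x_n)^{w(e)}) equals I(G_w)^{t-1}. -/

import Mathlib

/-- The edge ideal of an edge-weighted simple graph: generated by
`(x_i x_j)^(w {i,j})` over all edges `{i, j}` of `G`. -/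
noncomputable def edgeIdeal (K : Type*) [Field K] {V : Type*} (G : SimpleGraph V)
    (w : Sym2 V → ℕ) : Ideal (MvPolynomial V K) :=
  Ideal.span {p | ∃ i j, G.Adj i j ∧ p = (MvPolynomial.X i * MvPolynomial.X j) ^ w s(i, j)}

open MvPolynomial Finsupp

namespace ColonLeafAux

variable {V : Type*} (G : SimpleGraph V) (w : Sym2 V → ℕ)

/-- Exponent vectors of the generators of the edge ideal. -/
def Egens : Set (V →₀ ℕ) :=
  {d | ∃ i j, G.Adj i j ∧
    d = Finsupp.single i (w s(i, j)) + Finsupp.single j (w s(i, j))}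

/-- Exponent vectors of the generators of the `t`-th power of the edge ideal. -/
def Tset (t : ℕ) : Set (V →₀ ℕ) :=
  {d | ∃ f : Fin t → (V →₀ ℕ), (∀ k, f k ∈ Egens G w) ∧ d = ∑ k, f k}

lemma gen_eq (i j : V) (n : ℕ) :
    (MvPolynomial.X i * MvPolynomial.X j : MvPolynomial V ℚ) ^ n
      = monomial (Finsupp.single i n + Finsupp.single j n) 1 := by
  rw [mul_pow, X_pow_eq_monomial, X_pow_eq_monomial, monomial_mul, one_mul]

lemma edgeIdeal_eq (K : Type*) [Field K] :
    edgeIdeal K G w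
      = Ideal.span ((fun s => monomial s (1 : K)) '' Egens G w) := by
  unfold edgeIdeal
  congr 1
  ext p
  constructor
  · rintro ⟨i, j, h, rfl⟩
    exact ⟨_, ⟨i, j, h, rfl⟩, by
      rw [mul_pow, X_pow_eq_monomial, X_pow_eq_monomial, monomial_mul, one_mul]⟩
  · rintro ⟨_, ⟨i, j, h, rfl⟩, rfl⟩
    exact ⟨i, j, h, by
      rw [mul_pow, X_pow_eq_monomial, X_pow_eq_monomial, monomial_mul, one_mul]⟩

lemma pow_eq (K : Type*) [Field K] (t : ℕ) :
    edgeIdeal K G w ^ t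
      = Ideal.span ((fun s => monomial s (1 : K)) '' Tset G w t) := by
  induction t with
  | zero =>
    have h0 : Tset G w 0 = {0} := by
      ext d
      constructor
      · rintro ⟨f, -, rfl⟩; simp
      · rintro rfl
        exact ⟨Fin.elim0, fun k => k.elim0, by simp⟩
    rw [pow_zero, h0, Set.image_singleton]
    simp [Ideal.one_eq_top, Ideal.span_singleton_one, monomial_zero']
  | succ n ih =>
    rw [pow_succ, ih, edgeIdeal_eq, Ideal.span_mul_span']
    congr 1
    ext p
    constructor
    · rintro ⟨_, ⟨a, ha, rfl⟩, _, ⟨b, hb, rfl⟩, rfl⟩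
      refine ⟨a + b, ?_, by simp [monomial_mul]⟩
      obtain ⟨f, hf, rfl⟩ := ha
      refine ⟨Fin.snoc f b, ?_, ?_⟩
      · intro k
        refine Fin.lastCases ?_ ?_ k
        · simpa using hb
        · intro i; simpa using hf i
      · rw [Fin.sum_univ_castSucc]
        simp
    · rintro ⟨D, ⟨f, hf, rfl⟩, rfl⟩
      refine ⟨monomial (∑ i : Fin n, f i.castSucc) 1,
        ⟨_, ⟨fun i => f i.castSucc, fun i => hf _, rfl⟩, rfl⟩,
        monomial (f (Fin.last n)) 1, ⟨_, hf _, rfl⟩, ?_⟩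
      simp [monomial_mul, Fin.sum_univ_castSucc]

/-- The key combinatorial lemma. -/
lemma key {u v : V} (hleaf : G.neighborSet v = {u})
    (hmin : ∀ j, G.Adj u j → w s(u, v) ≤ w s(u, j))
    {t : ℕ} (ht : 1 ≤ t) {d D : V →₀ ℕ} (hD : D ∈ Tset G w t)
    (hle : D ≤ d + (Finsupp.single u (w s(u, v)) + Finsupp.single v (w s(u, v)))) :
    ∃ D' ∈ Tset G w (t - 1), D' ≤ d := by
  classical
  have hvu : G.Adj v u := (G.mem_neighborSet v u).mp (by rw [hleaf]; rfl)
  have hne : u ≠ v := hvu.ne'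
  obtain ⟨t', rfl⟩ : ∃ t', t = t' + 1 := ⟨t - 1, by omega⟩
  obtain ⟨f, hf, rfl⟩ := hD
  set W := w s(u, v) with hW
  set γ : V →₀ ℕ := Finsupp.single u W + Finsupp.single v W with hγ
  have hγu : γ u = W := by
    simp [hγ, Finsupp.single_eq_of_ne' (Ne.symm hne)]
  have hγv : γ v = W := by
    simp [hγ, Finsupp.single_eq_of_ne' hne]
  have hγx : ∀ x, x ≠ u → x ≠ v → γ x = 0 := by
    intro x hxu hxv
    simp [hγ, Finsupp.single_eq_of_ne' (Ne.symm hxu), Finsupp.single_eq_of_ne' (Ne.symm hxv)]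
  have hle' : ∀ x, (∑ k, f k) x ≤ d x + γ x := fun x => hle x
  have hsum : ∀ x, (∑ k : Fin (t' + 1), f k) x = ∑ k : Fin (t' + 1), f k x := by
    intro x; exact Finsupp.finset_sum_apply _ _ _
  -- dropping one index
  have hdrop : ∀ i₀ : Fin (t' + 1),
      (∑ k : Fin t', f (i₀.succAbove k)) ∈ Tset G w t' ∧
      (∑ k : Fin (t' + 1), f k) = f i₀ + ∑ k : Fin t', f (i₀.succAbove k) := by
    intro i₀
    exact ⟨⟨fun k => f (i₀.succAbove k), fun k => hf _, rfl⟩,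
      Fin.sum_univ_succAbove f i₀⟩
  by_cases hc : ∃ k, f k = γ
  · obtain ⟨k, hk⟩ := hc
    obtain ⟨hmem, heq⟩ := hdrop k
    refine ⟨∑ j : Fin t', f (k.succAbove j), by simpa using hmem, ?_⟩
    intro x
    have h1 := hle' x
    rw [heq, hk] at h1
    have h2 : γ x + (∑ j : Fin t', f (k.succAbove j)) x = (γ + ∑ j : Fin t', f (k.succAbove j)) x := rfl
    omega
  · push_neg at hc
    -- no generator touches v
    have hv0 : ∀ k, f k v = 0 := by
      intro k
      obtain ⟨i, j, hij, hk⟩ := hf k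
      have hiv : i ≠ v := by
        intro hiv
        apply hc k
        have hju : j = u := by
          have h2 : j ∈ G.neighborSet v := (G.mem_neighborSet v j).mpr (hiv ▸ hij)
          rw [hleaf] at h2; exact h2
        rw [hk, hiv, hju, hγ, hW]
        rw [show s(v, u) = s(u, v) from Sym2.eq_swap]
        exact add_comm _ _
      have hjv : j ≠ v := by
        intro hjv
        apply hc k
        have hiu : i = u := by
          have h2 : i ∈ G.neighborSet v := (G.mem_neighborSet v i).mpr (hjv ▸ hij.symm)
          rw [hleaf] at h2; exact h2
        rw [hk, hiu, hjv, hγ, hW]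
      rw [hk]
      simp [Finsupp.single_eq_of_ne' hiv, Finsupp.single_eq_of_ne' hjv]
    have hDv : (∑ k : Fin (t' + 1), f k) v = 0 := by
      rw [hsum]; exact Finset.sum_eq_zero fun k _ => hv0 k
    by_cases hu0 : ∃ k, f k u ≠ 0
    · obtain ⟨k, hku⟩ := hu0
      -- this generator is an edge at u with weight ≥ W
      have hWle : W ≤ f k u := by
        obtain ⟨i, j, hij, hk⟩ := hf k
        have happ : f k u = (if i = u then w s(i, j) else 0)
            + (if j = u then w s(i, j) else 0) := by
          rw [hk, Finsupp.add_apply, Finsupp.single_apply, Finsupp.single_apply]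
        rcases eq_or_ne i u with hiu | hiu
        · have h2 : W ≤ w s(i, j) := by
            rw [hiu]; exact hmin j (hiu ▸ hij)
          rw [happ, if_pos hiu]; omega
        · rcases eq_or_ne j u with hju | hju
          · have h2 : W ≤ w s(i, j) := by
              rw [hju, show s(i, u) = s(u, i) from Sym2.eq_swap]
              exact hmin i (hju ▸ hij.symm)
            rw [happ, if_neg hiu, if_pos hju]; omega
          · exfalso
            apply hku
            rw [happ, if_neg hiu, if_neg hju]
      obtain ⟨hmem, heq⟩ := hdrop k
      refine ⟨∑ j : Fin t', f (k.succAbove j), by simpa using hmem, ?_⟩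
      intro x
      have h1 := hle' x
      rw [heq] at h1
      have h2 : f k x + (∑ j : Fin t', f (k.succAbove j)) x
          = (f k + ∑ j : Fin t', f (k.succAbove j)) x := rfl
      rcases eq_or_ne x u with hxu | hxu
      · have h3 : γ x = W := by rw [hxu]; exact hγu
        have h4 : W ≤ f k x := by rw [hxu]; exact hWle
        omega
      · rcases eq_or_ne x v with hxv | hxv
        · have h3 : (f k + ∑ j : Fin t', f (k.succAbove j)) x = 0 := by
            rw [← heq, hxv]; exact hDv
          omega
        · rw [hγx x hxu hxv] at h1; omega
    · push_neg at hu0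
      have hDu : (∑ k : Fin (t' + 1), f k) u = 0 := by
        rw [hsum]; exact Finset.sum_eq_zero fun k _ => hu0 k
      have hDd : ∀ x, (∑ k : Fin (t' + 1), f k) x ≤ d x := by
        intro x
        rcases eq_or_ne x u with hxu | hxu
        · rw [hxu, hDu]; omega
        · rcases eq_or_ne x v with hxv | hxv
          · rw [hxv, hDv]; omega
          · have := hle' x; rw [hγx x hxu hxv] at this; exact this
      obtain ⟨hmem, heq⟩ := hdrop 0
      refine ⟨∑ j : Fin t', f ((0 : Fin (t' + 1)).succAbove j), by simpa using hmem, ?_⟩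
      intro x
      have h1 := hDd x
      rw [heq] at h1
      have h2 : f 0 x + (∑ j : Fin t', f ((0 : Fin (t' + 1)).succAbove j)) x
          = (f 0 + ∑ j : Fin t', f ((0 : Fin (t' + 1)).succAbove j)) x := rfl
      omega

end ColonLeafAux

theorem colon_leaf_edge {K : Type*} [Field K] {V : Type*} (G : SimpleGraph V)
    (w : Sym2 V → ℕ) (hw : ∀ e ∈ G.edgeSet, 1 ≤ w e)
    (u v : V) (hleaf : G.neighborSet v = {u})
    (hmin : ∀ j, G.Adj u j → w s(u, v) ≤ w s(u, j)) :
    ∀ t, 2 ≤ t →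
      (edgeIdeal K G w ^ t).colon
          ((Ideal.span {(MvPolynomial.X u * MvPolynomial.X v) ^ w s(u, v)} : Ideal (MvPolynomial V K)) : Set (MvPolynomial V K))
        = edgeIdeal K G w ^ (t - 1) := by
  intro t ht
  have hvu : G.Adj v u := (G.mem_neighborSet v u).mp (by rw [hleaf]; rfl)
  have hadj : G.Adj u v := hvu.symm
  set W := w s(u, v) with hW
  have hg : (MvPolynomial.X u * MvPolynomial.X v : MvPolynomial V K) ^ W
      = MvPolynomial.monomial (Finsupp.single u W + Finsupp.single v W) 1 := by
    rw [mul_pow, MvPolynomial.X_pow_eq_monomial, MvPolynomial.X_pow_eq_monomial,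
      MvPolynomial.monomial_mul, one_mul]
  apply le_antisymm
  · intro p hp
    rw [Ideal.mem_colon_span_singleton] at hp
    rw [ColonLeafAux.pow_eq G w K t, hg] at hp
    rw [ColonLeafAux.pow_eq G w K (t - 1)]
    rw [MvPolynomial.mem_ideal_span_monomial_image] at hp ⊢
    intro d hd
    have hd' : d + (Finsupp.single u W + Finsupp.single v W)
        ∈ (p * MvPolynomial.monomial (Finsupp.single u W + Finsupp.single v W) (1 : K)).support := by
      rw [MvPolynomial.mem_support_iff, MvPolynomial.coeff_mul_monomial, mul_one]
      exact MvPolynomial.mem_support_iff.mp hd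
    obtain ⟨D, hD, hle⟩ := hp _ hd'
    exact ColonLeafAux.key G w hleaf hmin (by omega : 1 ≤ t) hD hle
  · intro p hp
    rw [Ideal.mem_colon_span_singleton]
    have hgmem : (MvPolynomial.X u * MvPolynomial.X v : MvPolynomial V K) ^ W
        ∈ edgeIdeal K G w := Ideal.subset_span ⟨u, v, hadj, rfl⟩
    have hmul := Ideal.mul_mem_mul hp hgmem
    rwa [← pow_succ, Nat.sub_add_cancel (by omega)] at hmul
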